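/- Let O be a continuous rigid motion in ℝ² consisting of a pure rotation of a convex polygon Q = convexHull{v₁,…,v_k} (containing the origin) about the origin by angle Δ ∈ (0, π/3]. Then the reachable set ⋃_{θ∈[0,Δ]} R_θ(Q) is contained in the convex hull of Q ∪ R_Δ(Q) ∪ {v_i* : i = 1..k}, where v_i* is the point on the ray through the midpoint of [v_i, R_Δ v_i] at distance ‖v_i‖/cos(Δ/2) from the origin. -/

import Mathlib

lemma arc_mem (Δ θ : ℝ) (hΔ0 : 0 < Δ) (hΔ : Δ ≤ Real.pi / 3)
    (hθ0 : 0 ≤ θ) (hθΔ : θ ≤ Δ) (w : ℂ) :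
    Complex.exp (θ * Complex.I) * w ∈ convexHull ℝ
      ({w, Complex.exp (Δ * Complex.I) * w,
        (1 / (Real.cos (Δ / 2))^2) • ((w + Complex.exp (Δ * Complex.I) * w) / 2)} : Set ℂ) := by
  have hpi := Real.pi_pos
  set s := Δ / 2 with hs
  set φ := θ - s with hφdef
  have hspos : 0 < s := by rw [hs]; linarith
  have hsle : s ≤ Real.pi / 6 := by rw [hs]; linarith
  have hsin : 0 < Real.sin s := Real.sin_pos_of_pos_of_lt_pi hspos (by linarith)
  have hcos : 0 < Real.cos s := Real.cos_pos_of_mem_Ioo ⟨by linarith, by linarith⟩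
  have hφabs : |φ| ≤ s := abs_le.2 ⟨by rw [hφdef, hs]; linarith, by rw [hφdef, hs]; linarith⟩
  have hcosφ : Real.cos s ≤ Real.cos φ := by
    rw [← Real.cos_abs φ]
    exact Real.cos_le_cos_of_nonneg_of_le_pi (abs_nonneg _) (by linarith) hφabs
  set a := (1 - Real.cos (φ - s)) / (2 * (Real.sin s)^2) with ha
  set b := (1 - Real.cos (φ + s)) / (2 * (Real.sin s)^2) with hb
  set c := (Real.cos φ - Real.cos s) * Real.cos s / (Real.sin s)^2 with hc
  have ha0 : 0 ≤ a := by
    apply div_nonneg _ (by positivity)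
    nlinarith [Real.cos_le_one (φ - s)]
  have hb0 : 0 ≤ b := by
    apply div_nonneg _ (by positivity)
    nlinarith [Real.cos_le_one (φ + s)]
  have hc0 : 0 ≤ c := by
    apply div_nonneg _ (by positivity)
    nlinarith
  have hΔ2 : Δ = s + s := by rw [hs]; ring
  have hθ2 : θ = φ + s := by rw [hφdef]; ring
  have keyre : (1 - Real.cos (φ - s)) * (Real.cos s)^2
      + (1 - Real.cos (φ + s)) * (Real.cos s)^2 * Real.cos Δ
      + (Real.cos φ - Real.cos s) * Real.cos s * (1 + Real.cos Δ)
      = Real.cos θ * (2 * (Real.sin s)^2 * (Real.cos s)^2) := by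
    rw [hΔ2, hθ2, Real.cos_add, Real.cos_add, Real.cos_sub]
    linear_combination (-(Real.cos φ * (Real.cos s)^3) + Real.sin φ * (Real.cos s)^2 * Real.sin s
      - Real.cos φ * Real.cos s) * Real.sin_sq_add_cos_sq s
  have keyim : (1 - Real.cos (φ + s)) * Real.sin Δ * (Real.cos s)^2
      + (Real.cos φ - Real.cos s) * Real.cos s * Real.sin Δ
      = Real.sin θ * (2 * (Real.sin s)^2 * (Real.cos s)^2) := by
    rw [hΔ2, hθ2, Real.sin_add, Real.sin_add, Real.cos_add]
    linear_combination (-2 * Real.cos φ * (Real.cos s)^2 * Real.sin s) * Real.sin_sq_add_cos_sq s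
  have keysum : (1 - Real.cos (φ - s)) + (1 - Real.cos (φ + s))
      + 2 * ((Real.cos φ - Real.cos s) * Real.cos s) = 2 * (Real.sin s)^2 := by
    rw [Real.cos_add, Real.cos_sub]
    linear_combination (-2 : ℝ) * Real.sin_sq_add_cos_sq s
  have hsum : a + b + c = 1 := by
    rw [ha, hb, hc, eq_comm, ← sub_eq_zero]
    field_simp
    linear_combination (-1 : ℝ) * keysum
  have hre : a + b * Real.cos Δ + c * ((1/(Real.cos s)^2) * ((1 + Real.cos Δ)/2)) = Real.cos θ := by
    rw [ha, hb, hc]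
    rw [eq_comm, ← sub_eq_zero]
    field_simp
    apply mul_left_cancel₀ hcos.ne'
    linear_combination (-1 : ℝ) * keyre
  have him : b * Real.sin Δ + c * ((1/(Real.cos s)^2) * (Real.sin Δ/2)) = Real.sin θ := by
    rw [hb, hc]
    rw [eq_comm, ← sub_eq_zero]
    field_simp
    apply mul_left_cancel₀ hcos.ne'
    linear_combination (-1 : ℝ) * keyim
  have hkey : (a : ℂ) + b * Complex.exp (Δ * Complex.I)
      + c * (((1 / (Real.cos s)^2 : ℝ) : ℂ) * ((1 + Complex.exp (Δ * Complex.I)) / 2))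
      = Complex.exp (θ * Complex.I) := by
    rw [Complex.exp_mul_I, Complex.exp_mul_I, ← Complex.ofReal_cos, ← Complex.ofReal_sin,
      ← Complex.ofReal_cos, ← Complex.ofReal_sin]
    have h1 := congrArg (fun x : ℝ => (x : ℂ)) hre
    have h2 := congrArg (fun x : ℝ => (x : ℂ)) him
    push_cast at h1 h2 ⊢
    linear_combination h1 + Complex.I * h2
  -- now use convexity
  have hmem := (convex_convexHull ℝ ({w, Complex.exp (Δ * Complex.I) * w,
        (1 / (Real.cos (Δ / 2))^2) • ((w + Complex.exp (Δ * Complex.I) * w) / 2)} : Set ℂ)).sum_mem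
    (t := Finset.univ) (w := ![a, b, c])
    (z := ![w, Complex.exp (Δ * Complex.I) * w,
        (1 / (Real.cos (Δ / 2))^2) • ((w + Complex.exp (Δ * Complex.I) * w) / 2)])
    (fun i _ => by fin_cases i <;> simpa using by assumption)
    (by simp [Fin.sum_univ_three]; linarith)
    (fun i _ => subset_convexHull ℝ _ (by fin_cases i <;> simp))
  convert hmem using 1
  rw [Fin.sum_univ_three]
  simp only [Matrix.cons_val_zero, Matrix.cons_val_one, Matrix.head_cons, Matrix.cons_val_two,
    Matrix.tail_cons, Complex.real_smul]
  rw [hs] at hkey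
  linear_combination (-w) * hkey

/-- Rotating a convex polygon `Q = convexHull {v₁,…,v_k}` (containing the origin of
ℝ² ≃ ℂ) about the origin by an angle `Δ ∈ (0, π/3]`: the reachable set
`⋃_{θ∈[0,Δ]} R_θ(Q)` is contained in the convex hull of `Q ∪ R_Δ(Q) ∪ {vᵢ*}`,
where `vᵢ*` lies on the ray from the origin through the midpoint of
`[vᵢ, R_Δ vᵢ]` at distance `‖vᵢ‖ / cos (Δ/2)` from the origin. -/
theorem rotation_sweep_subset_convexHull {k : ℕ}
    (v : Fin k → ℂ) (Q : Set ℂ) (hQ : Q = convexHull ℝ (Set.range v))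
    (h0 : (0 : ℂ) ∈ Q)
    (Δ : ℝ) (hΔ0 : 0 < Δ) (hΔ : Δ ≤ Real.pi / 3) :
    (⋃ θ ∈ Set.Icc (0 : ℝ) Δ, (fun z => Complex.exp (θ * Complex.I) * z) '' Q) ⊆
      convexHull ℝ (Q ∪ ((fun z => Complex.exp (Δ * Complex.I) * z) '' Q) ∪
        Set.range (fun i =>
          (1 / (Real.cos (Δ / 2))^2) •
            ((v i + Complex.exp (Δ * Complex.I) * v i) / 2))) := by
  intro p hp
  simp only [Set.mem_iUnion, Set.mem_image, Set.mem_Icc, exists_prop] at hp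
  obtain ⟨θ, ⟨hθ0, hθΔ⟩, z, hz, rfl⟩ := hp
  set B : Set ℂ := Q ∪ ((fun z => Complex.exp (Δ * Complex.I) * z) '' Q) ∪
        Set.range (fun i =>
          (1 / (Real.cos (Δ / 2))^2) •
            ((v i + Complex.exp (Δ * Complex.I) * v i) / 2)) with hB
  have himg : Complex.exp (θ * Complex.I) * z ∈
      (LinearMap.mulLeft ℝ (Complex.exp (θ * Complex.I))) '' (convexHull ℝ (Set.range v)) :=
    ⟨z, by rw [← hQ]; exact hz, rfl⟩
  rw [LinearMap.image_convexHull] at himg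
  refine convexHull_min ?_ (convex_convexHull ℝ B) himg
  rintro x ⟨y, ⟨i, rfl⟩, rfl⟩
  have harc := arc_mem Δ θ hΔ0 hΔ hθ0 hθΔ (v i)
  have hsubset : ({v i, Complex.exp (Δ * Complex.I) * v i,
      (1 / (Real.cos (Δ / 2))^2) • ((v i + Complex.exp (Δ * Complex.I) * v i) / 2)} : Set ℂ) ⊆ B := by
    intro x hx
    rcases hx with rfl | rfl | rfl
    · exact Or.inl (Or.inl (hQ ▸ subset_convexHull ℝ _ ⟨i, rfl⟩))
    · exact Or.inl (Or.inr ⟨v i, hQ ▸ subset_convexHull ℝ _ ⟨i, rfl⟩, rfl⟩)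
    · exact Or.inr ⟨i, rfl⟩
  exact convexHull_mono hsubset harc
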